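/- arXiv:2405.00480 — 2 statements merged into one kernel-verified Lean document; each statement's English description precedes it below -/
import Mathlib

section
/- If x ∈ W, x' ∈ maxRepr(W), x ∼_h x' and b(x) ≥ h (for some h ≤ k), then b(x') ≥ h. -/
/-- A finite pointed Kripke model with modality indices `I` and atoms `P`. -/
structure PModel (I P : Type) where
  W : Type
  fin : Finite W
  R : I → W → W → Prop
  V : P → W → Prop
  d : W

variable {I P : Type}

/-- `h`-bisimilarity between worlds of two models (back-and-forth to depth `h`). -/
def Bisim (M N : PModel I P) : ℕ → M.W → N.W → Prop
  | 0, w, v => ∀ p, M.V p w ↔ N.V p v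
  | h+1, w, v => (∀ p, M.V p w ↔ N.V p v)
      ∧ (∀ i w', M.R i w w' → ∃ v', N.R i v v' ∧ Bisim M N h w' v')
      ∧ (∀ i v', N.R i v v' → ∃ w', M.R i w w' ∧ Bisim M N h w' v')

/-- `k`-bisimilarity of pointed models. -/
def PBisim (k : ℕ) (M N : PModel I P) : Prop := Bisim M N k M.d N.d

/-- Directed paths of length `n`. -/
def Steps (M : PModel I P) : ℕ → M.W → M.W → Prop
  | 0, w, v => w = v
  | n+1, w, v => ∃ u i, M.R i w u ∧ Steps M n u v

/-- Depth of a world: length of a shortest path from the designated world (`⊤` if none). -/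
noncomputable def depth (M : PModel I P) (w : M.W) : ℕ∞ :=
  sInf {n : ℕ∞ | ∃ m : ℕ, n = (m : ℕ∞) ∧ Steps M m M.d w}

/-- Bound `b(w) = k − d(w)`, with `⊥` for unreachable worlds. -/
noncomputable def bound (k : ℕ) (M : PModel I P) (w : M.W) : WithBot ℤ :=
  ENat.recTopCoe (⊥ : WithBot ℤ) (fun n : ℕ => (((k : ℤ) - n : ℤ) : WithBot ℤ)) (depth M w)

/-- The bound as a natural number (meaningful when `0 ≤ bound k M w`). -/
noncomputable def nbound (k : ℕ) (M : PModel I P) (w : M.W) : ℕ :=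
  k - (depth M w).toNat
/-- `x` represents `y` : `b(x) ≥ b(y) ≥ 0` and `x ∼_{b(y)} y`. -/
noncomputable def Repr' (k : ℕ) (M : PModel I P) (x y : M.W) : Prop :=
  0 ≤ bound k M y ∧ bound k M y ≤ bound k M x ∧ Bisim M M (nbound k M y) x y

/-- `x` strictly represents `y`. -/
noncomputable def SRepr (k : ℕ) (M : PModel I P) (x y : M.W) : Prop :=
  Repr' k M x y ∧ bound k M y < bound k M x

/-- Maximal representatives. -/
noncomputable def maxRepr (k : ℕ) (M : PModel I P) : Set M.W :=
  {x | 0 ≤ bound k M x ∧ ∀ y, ¬ SRepr k M y x}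

/-- Representative class `[x]_{b(x)}`. -/
noncomputable def reprClass (k : ℕ) (M : PModel I P) (x : M.W) : Set M.W :=
  {y | Bisim M M (nbound k M x) x y}


lemma bisim_mono {M N : PModel I P} : ∀ {h m : ℕ}, m ≤ h → ∀ {w v}, Bisim M N h w v → Bisim M N m w v := by
  intro h
  induction h with
  | zero =>
    intro m hm w v hb
    interval_cases m
    exact hb
  | succ n ih =>
    intro m hm w v hb
    cases m with
    | zero => exact hb.1
    | succ m =>
      refine ⟨hb.1, ?_, ?_⟩
      · intro i w' hr
        obtain ⟨v', hr', hb'⟩ := hb.2.1 i w' hr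
        exact ⟨v', hr', ih (Nat.succ_le_succ_iff.mp hm) hb'⟩
      · intro i v' hr
        obtain ⟨w', hr', hb'⟩ := hb.2.2 i v' hr
        exact ⟨w', hr', ih (Nat.succ_le_succ_iff.mp hm) hb'⟩

/-- Claim (†): if `x ∼_h x'` for a maximal representative `x'` and `b(x) ≥ h`,
then `b(x') ≥ h`. -/
theorem maxRepr_bound_ge (k h : ℕ) (hk : h ≤ k) (M : PModel I P) (x x' : M.W)
    (hx' : x' ∈ maxRepr k M) (hbis : Bisim M M h x x')
    (hb : ((h : ℤ) : WithBot ℤ) ≤ bound k M x) :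
    ((h : ℤ) : WithBot ℤ) ≤ bound k M x' := by
  by_contra hlt
  push_neg at hlt
  obtain ⟨hx0, hmax⟩ := hx'
  cases hd : depth M x' with
  | top =>
    rw [bound, hd] at hx0
    simp at hx0
  | coe n =>
    have hb' : bound k M x' = (((k : ℤ) - n : ℤ) : WithBot ℤ) := by
      rw [bound, hd]; rfl
    rw [hb'] at hx0 hlt
    have hn : n ≤ k := by
      have := WithBot.coe_le_coe.mp hx0
      omega
    have hkn : (k : ℤ) - n < h := by
      exact_mod_cast WithBot.coe_lt_coe.mp hlt
    have hnb : nbound k M x' = k - n := by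
      rw [nbound, hd]; rfl
    have hle : nbound k M x' ≤ h := by omega
    exact hmax x ⟨⟨hb' ▸ hx0, hb' ▸ le_of_lt (lt_of_lt_of_le hlt hb),
      bisim_mono hle hbis⟩, hb' ▸ lt_of_lt_of_le hlt hb⟩
end

section
/- In the binary-tree model M_k (defined below), any two distinct worlds σ, τ at the same depth n are (k−n)-bisimilar but not (k−n+1)-bisimilar. -/
variable {I P : Type}

/-- The binary-tree model `M_k`: worlds are the strings over `{l, r}` (encoded by
`Bool`: `false` = `l`, `true` = `r`) of length at most `k`; the designated world is
the empty string; `p_n` holds exactly at the worlds of length `n`; modality `true`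
(= `s`) gives the solid tree edges `σ → σα`, and modality `false` (= `d`) gives the
dashed edges from each leaf `α_1⋯α_k` to `l^n` whenever `α_{n+1} = l`. -/
noncomputable def Mk (k : ℕ) : PModel Bool (Fin (k+1)) where
  W := {σ : List Bool // σ.length ≤ k}
  fin := (List.finite_length_le Bool k).to_subtype
  R := fun m σ τ =>
    if m then ∃ a : Bool, τ.1 = σ.1 ++ [a]
    else σ.1.length = k ∧
      ∃ n : ℕ, τ.1 = List.replicate n false ∧ σ.1[n]? = some false
  V := fun p σ => σ.1.length = (p : ℕ)
  d := ⟨[], by simp⟩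

lemma bisim_symm {I P : Type} {M N : PModel I P} :
    ∀ h (w : M.W) (v : N.W), Bisim M N h w v → Bisim N M h v w := by
  intro h
  induction h with
  | zero => intro w v hb p; exact (hb p).symm
  | succ h ih =>
    rintro w v ⟨hp, hf, hb⟩
    refine ⟨fun p => (hp p).symm, ?_, ?_⟩
    · intro i v' hv
      obtain ⟨w', hw, h'⟩ := hb i v' hv
      exact ⟨w', hw, ih _ _ h'⟩
    · intro i w' hw
      obtain ⟨v', hv, h'⟩ := hf i w' hw
      exact ⟨v', hv, ih _ _ h'⟩

lemma Mk_pos (k : ℕ) : ∀ h (σ τ : (Mk k).W), σ.1.length = τ.1.length →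
    σ.1.length + h ≤ k → Bisim (Mk k) (Mk k) h σ τ := by
  intro h
  induction h with
  | zero =>
    intro σ τ hlen _ p
    show σ.1.length = (p : ℕ) ↔ τ.1.length = (p : ℕ)
    rw [hlen]
  | succ h ih =>
    intro σ τ hlen hle
    refine ⟨fun p => by rw [show (Mk k).V p σ ↔ σ.1.length = (p:ℕ) from Iff.rfl,
      show (Mk k).V p τ ↔ τ.1.length = (p:ℕ) from Iff.rfl, hlen], ?_, ?_⟩
    · intro i σ' hσ'
      cases i with
      | false =>
        exfalso
        simp only [Mk, if_neg (Bool.false_ne_true)] at hσ'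
        omega
      | true =>
        obtain ⟨a, ha⟩ : ∃ a : Bool, σ'.1 = σ.1 ++ [a] := by simpa [Mk] using hσ'
        refine ⟨⟨τ.1 ++ [a], by simp; omega⟩, by simp [Mk], ?_⟩
        apply ih
        · simp [ha, hlen]
        · simp [ha]; omega
    · intro i τ' hτ'
      cases i with
      | false =>
        exfalso
        simp only [Mk, if_neg (Bool.false_ne_true)] at hτ'
        omega
      | true =>
        obtain ⟨a, ha⟩ : ∃ a : Bool, τ'.1 = τ.1 ++ [a] := by simpa [Mk] using hτ'
        refine ⟨⟨σ.1 ++ [a], by simp; omega⟩, by simp [Mk], ?_⟩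
        apply ih
        · simp [ha, hlen]
        · simp; omega

lemma Mk_neg (k : ℕ) : ∀ m (σ τ : (Mk k).W) (j : ℕ),
    σ.1.length = τ.1.length → σ.1.length + m = k →
    σ.1[j]? = some false → τ.1[j]? = some true →
    ¬ Bisim (Mk k) (Mk k) (m + 1) σ τ := by
  intro m
  induction m with
  | zero =>
    rintro σ τ j hlen hk hσj hτj ⟨_, hf, _⟩
    have hjlt : j < σ.1.length := by
      by_contra h
      rw [List.getElem?_eq_none_iff.mpr (le_of_not_gt h)] at hσj
      exact Option.noConfusion rfl (heq_of_eq hσj)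
    have hR : (Mk k).R false σ ⟨List.replicate j false, by simp; omega⟩ := by
      simp only [Mk, if_neg Bool.false_ne_true]
      exact ⟨by omega, j, rfl, hσj⟩
    obtain ⟨τ', hRτ, h0⟩ := hf false _ hR
    obtain ⟨-, n', hrep, hget⟩ : τ.1.length = k ∧ ∃ n', τ'.1 = List.replicate n' false ∧
        τ.1[n']? = some false := by
      simpa only [Mk, if_neg Bool.false_ne_true] using hRτ
    have hlj : τ'.1.length = j := by
      have := (h0 ⟨j, by omega⟩).mp (by simp [Mk])
      simpa [Mk] using this
    have : n' = j := by
      rw [hrep] at hlj; simpa using hlj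
    rw [this, hτj] at hget
    exact Bool.noConfusion (Option.some.inj hget)
  | succ m ih =>
    rintro σ τ j hlen hk hσj hτj ⟨_, hf, _⟩
    have hjlt : j < σ.1.length := by
      by_contra h
      rw [List.getElem?_eq_none_iff.mpr (le_of_not_gt h)] at hσj
      exact Option.noConfusion rfl (heq_of_eq hσj)
    have hR : (Mk k).R true σ ⟨σ.1 ++ [false], by simp; omega⟩ := by
      simp only [Mk, if_pos]
      exact ⟨false, rfl⟩
    obtain ⟨τ', hRτ, hb'⟩ := hf true _ hR
    obtain ⟨a, ha⟩ : ∃ a : Bool, τ'.1 = τ.1 ++ [a] := by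
      simpa only [Mk, if_pos] using hRτ
    refine ih ⟨σ.1 ++ [false], by simp; omega⟩ τ' j ?_ ?_ ?_ ?_ hb'
    · simp [ha, hlen]
    · simp; omega
    · show (σ.1 ++ [false])[j]? = some false
      rw [List.getElem?_append_left hjlt]; exact hσj
    · show τ'.1[j]? = some true
      rw [ha, List.getElem?_append_left (by omega)]; exact hτj

/-- Two distinct worlds of `M_k` at the same depth `n` are `(k−n)`-bisimilar but not
`(k−n+1)`-bisimilar. -/
theorem Mk_same_depth_bisim (k n : ℕ) (σ τ : (Mk k).W) (hne : σ ≠ τ)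
    (hσ : σ.1.length = n) (hτ : τ.1.length = n) :
    Bisim (Mk k) (Mk k) (k - n) σ τ ∧ ¬ Bisim (Mk k) (Mk k) (k - n + 1) σ τ := by
  have hnk : n ≤ k := hσ ▸ σ.2
  have hlen : σ.1.length = τ.1.length := hσ.trans hτ.symm
  constructor
  · exact Mk_pos k (k - n) σ τ hlen (by omega)
  · have hne' : σ.1 ≠ τ.1 := fun h => hne (Subtype.ext h)
    obtain ⟨j, hj⟩ : ∃ j, σ.1[j]? ≠ τ.1[j]? := by
      by_contra h
      push_neg at h
      exact hne' (List.ext_getElem? h)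
    have hjlt : j < n := by
      by_contra h
      push_neg at h
      rw [List.getElem?_eq_none_iff.mpr (by omega), List.getElem?_eq_none_iff.mpr (by omega)] at hj
      exact hj rfl
    have hσg : σ.1[j]? = some (σ.1.get ⟨j, by omega⟩) := List.getElem?_eq_getElem (by omega)
    have hτg : τ.1[j]? = some (τ.1.get ⟨j, by omega⟩) := List.getElem?_eq_getElem (by omega)
    have hm : σ.1.length + (k - n) = k := by omega
    cases hσa : σ.1.get ⟨j, by omega⟩ <;> cases hτa : τ.1.get ⟨j, by omega⟩
    · rw [hσa] at hσg; rw [hτa] at hτg; rw [hσg, hτg] at hj; exact absurd rfl hj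
    · rw [hσa] at hσg; rw [hτa] at hτg
      exact Mk_neg k (k - n) σ τ j hlen hm hσg hτg
    · rw [hσa] at hσg; rw [hτa] at hτg
      intro hb
      exact Mk_neg k (k - n) τ σ j hlen.symm (by omega) hτg hσg (bisim_symm _ _ _ hb)
    · rw [hσa] at hσg; rw [hτa] at hτg; rw [hσg, hτg] at hj; exact absurd rfl hj
end
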